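/- The n-row matrix whose columns are all n-columns with at most k−1 entries equal to l (entries from {0,…,l}) contains no K_k^l as a submatrix; consequently forb(n, K_k^l; l) ≥ ∑_{i=0}^{k-1} l^{n−i} · binomial(n, i). -/

import Mathlib

/-- `F` is a submatrix of `M` (up to row/column permutations): there are injections
selecting rows and columns of `M` giving `F`. -/
def IsSubmatrix {α : Type*} {k c n m : ℕ} (F : Fin k → Fin c → α) (M : Fin n → Fin m → α) :
    Prop :=
  ∃ r : Fin k → Fin n, ∃ s : Fin c → Fin m,
    Function.Injective r ∧ Function.Injective s ∧ ∀ i j, M (r i) (s j) = F i j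

/-- A matrix is simple if its columns are pairwise distinct. -/
def Simple' {α : Type*} {n m : ℕ} (M : Fin n → Fin m → α) : Prop :=
  ∀ j₁ j₂ : Fin m, (∀ i, M i j₁ = M i j₂) → j₁ = j₂

/-- `C` occurs as a column of `M`. -/
def IsCol {α : Type*} {n m : ℕ} (M : Fin n → Fin m → α) (C : Fin n → α) : Prop :=
  ∃ j, ∀ i, M i j = C i

/-- The matrix `[M, C]` obtained by appending the column `C` to `M`. -/
def addCol {α : Type*} {n m : ℕ} (M : Fin n → Fin m → α) (C : Fin n → α) :
    Fin n → Fin (m + 1) → α :=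
  fun i j => if h : (j : ℕ) < m then M i ⟨j, h⟩ else C i

/-- `M` is `F`-saturated: simple, `F`-free, and adding any missing column creates `F`. -/
def Saturated {α : Type*} {k c n m : ℕ} (F : Fin k → Fin c → α) (M : Fin n → Fin m → α) :
    Prop :=
  Simple' M ∧ ¬ IsSubmatrix F M ∧
    ∀ C : Fin n → α, ¬ IsCol M C → IsSubmatrix F (addCol M C)

/-- The set of sizes (numbers of columns) of `F`-saturated `n`-row matrices. -/
def satSet {α : Type*} {k c : ℕ} (F : Fin k → Fin c → α) (n : ℕ) : Set ℕ :=
  {m | ∃ M : Fin n → Fin m → α, Saturated F M}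

/-- The set of sizes of simple `F`-free `n`-row matrices. -/
def forbSet {α : Type*} {k c : ℕ} (F : Fin k → Fin c → α) (n : ℕ) : Set ℕ :=
  {m | ∃ M : Fin n → Fin m → α, Simple' M ∧ ¬ IsSubmatrix F M}

/-- `K_k`: the `k × 2^k` 0-1 matrix of all distinct 0-1 columns of length `k`. -/
def Kfull (k : ℕ) : Fin k → Fin (2 ^ k) → Bool :=
  fun i j => Nat.testBit j.val i.val

/-- `K_k^l`: the `k × (l+1)^k` matrix of all distinct `k`-columns over `{0,…,l}`. -/
def Kgen (k l : ℕ) : Fin k → Fin ((l + 1) ^ k) → Fin (l + 1) :=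
  fun i j => ⟨(j.val / (l + 1) ^ i.val) % (l + 1), Nat.mod_lt _ (Nat.succ_pos l)⟩


lemma digit_all_l (l k i : ℕ) (hi : i < k) :
    ((l + 1) ^ k - 1) / (l + 1) ^ i % (l + 1) = l := by
  set p := l + 1 with hp
  have h1 : p ^ i * p ^ (k - i) = p ^ k := by rw [← pow_add]; congr 1; omega
  have h2 : 1 ≤ p ^ i := Nat.one_le_pow _ _ (by omega)
  have h3 : 1 ≤ p ^ (k - i) := Nat.one_le_pow _ _ (by omega)
  have h4 : p ^ i ≤ p ^ k := by nlinarith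
  have key : p ^ k - 1 = (p ^ i - 1) + p ^ i * (p ^ (k - i) - 1) := by
    have : p ^ i * (p ^ (k - i) - 1) = p ^ k - p ^ i := by
      rw [Nat.mul_sub, h1, Nat.mul_one]
    omega
  rw [key, Nat.add_mul_div_left _ _ (by omega : 0 < p ^ i),
    Nat.div_eq_of_lt (by omega), Nat.zero_add]
  -- now (p^(k-i) - 1) % p = l
  have h5 : 1 ≤ k - i := by omega
  have h6 : p * p ^ (k - i - 1) = p ^ (k - i) := by
    rw [← pow_succ']; congr 1; omega
  have h7 : 1 ≤ p ^ (k - i - 1) := Nat.one_le_pow _ _ (by omega)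
  have key2 : p ^ (k - i) - 1 = (p - 1) + p * (p ^ (k - i - 1) - 1) := by
    have : p * (p ^ (k - i - 1) - 1) = p ^ (k - i) - p := by
      rw [Nat.mul_sub, h6, Nat.mul_one]
    have : p ≤ p ^ (k - i) := by nlinarith
    omega
  rw [key2, Nat.add_mul_mod_self_left, Nat.mod_eq_of_lt (by omega)]
  omega


open Finset

lemma count_exact (n l i : ℕ) :
    (univ.filter fun C : Fin n → Fin (l + 1) =>
      (univ.filter fun j => (C j : ℕ) = l).card = i).card = n.choose i * l ^ (n - i) := by
  set ll : Fin (l + 1) := ⟨l, Nat.lt_succ_self l⟩ with hll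
  have hset : (univ.filter fun C : Fin n → Fin (l + 1) =>
      (univ.filter fun j => (C j : ℕ) = l).card = i) =
      (univ.powersetCard i).biUnion (fun T =>
        Fintype.piFinset (fun j : Fin n => if j ∈ T then ({ll} : Finset (Fin (l+1))) else univ.erase ll)) := by
    ext C
    simp only [mem_filter, mem_univ, true_and, mem_biUnion, mem_powersetCard_univ,
      Fintype.mem_piFinset]
    constructor
    · intro h
      refine ⟨univ.filter fun j => (C j : ℕ) = l, h, fun j => ?_⟩
      by_cases hj : (C j : ℕ) = l
      · simp [hj, Fin.ext_iff, hll]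
      · simp [hj, Fin.ext_iff, hll]
    · rintro ⟨T, hT, hmem⟩
      have : (univ.filter fun j => (C j : ℕ) = l) = T := by
        ext j
        simp only [mem_filter, mem_univ, true_and]
        have := hmem j
        by_cases hj : j ∈ T <;> simp [hj, Fin.ext_iff, hll] at this ⊢ <;> omega
      rw [this, hT]
  rw [hset, card_biUnion]
  · have hcard : ∀ T ∈ univ.powersetCard i,
        (Fintype.piFinset (fun j : Fin n => if j ∈ T then ({ll} : Finset (Fin (l+1))) else univ.erase ll)).card
          = l ^ (n - i) := by
      intro T hT
      rw [mem_powersetCard_univ] at hT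
      rw [Fintype.card_piFinset _]
      have : ∀ j : Fin n, (if j ∈ T then ({ll} : Finset (Fin (l+1))) else univ.erase ll).card
          = if j ∈ T then 1 else l := by
        intro j; split_ifs <;> simp [card_erase_of_mem]
      rw [Finset.prod_congr rfl fun j _ => this j]
      rw [Finset.prod_ite, Finset.prod_const, Finset.prod_const, one_pow, one_mul]
      congr 1
      have h2 := Finset.card_filter_add_card_filter_not (s := (univ : Finset (Fin n)))
        (p := fun j => j ∈ T)
      have h3 : (univ.filter fun j => j ∈ T).card = i := by
        rw [Finset.filter_univ_mem, hT]
      simp only [Finset.card_univ, Fintype.card_fin] at h2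
      omega
    rw [Finset.sum_congr rfl hcard, Finset.sum_const, Finset.card_powersetCard,
      Finset.card_univ, Fintype.card_fin, smul_eq_mul]
  · intro T₁ h₁ T₂ h₂ hne
    simp only [Finset.disjoint_left]
    intro C hc1 hc2
    apply hne
    rw [Fintype.mem_piFinset] at hc1 hc2
    ext j
    have a1 := hc1 j; have a2 := hc2 j
    by_cases hj1 : j ∈ T₁ <;> by_cases hj2 : j ∈ T₂ <;>
      simp [hj1, hj2, Fin.ext_iff] at a1 a2 ⊢ <;> omega

lemma count_total (n l k : ℕ) (hk : 1 ≤ k) :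
    (Finset.univ.filter fun C : Fin n → Fin (l + 1) =>
      (Finset.univ.filter fun j => (C j : ℕ) = l).card ≤ k - 1).card
      = ∑ i ∈ Finset.range k, l ^ (n - i) * n.choose i := by
  have hmem : ∀ C ∈ (Finset.univ.filter fun C : Fin n → Fin (l + 1) =>
      (Finset.univ.filter fun j => (C j : ℕ) = l).card ≤ k - 1),
      (Finset.univ.filter fun j => (C j : ℕ) = l).card ∈ Finset.range k := by
    intro C hC
    rw [Finset.mem_filter] at hC
    rw [Finset.mem_range]; omega
  rw [Finset.card_eq_sum_card_fiberwise hmem]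
  refine Finset.sum_congr rfl fun i hi => ?_
  rw [Finset.mem_range] at hi
  rw [Finset.filter_filter]
  have : (Finset.univ.filter fun C : Fin n → Fin (l + 1) =>
      ((Finset.univ.filter fun j => (C j : ℕ) = l).card ≤ k - 1) ∧
      (Finset.univ.filter fun j => (C j : ℕ) = l).card = i) =
      (Finset.univ.filter fun C : Fin n → Fin (l + 1) =>
      (Finset.univ.filter fun j => (C j : ℕ) = l).card = i) := by
    apply Finset.filter_congr
    intro C _
    constructor
    · exact fun h => h.2
    · exact fun h => ⟨by omega, h⟩
  rw [this, count_exact, Nat.mul_comm]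

theorem stmt_1 (l k n : ℕ) (hl : 1 ≤ l) (hk : 1 ≤ k) :
    (∀ (m : ℕ) (M : Fin n → Fin m → Fin (l + 1)),
      (∀ j, (Finset.univ.filter fun i => (M i j : ℕ) = l).card ≤ k - 1) →
      ¬ IsSubmatrix (Kgen k l) M) ∧
    ∃ M : Fin n → Fin (∑ i ∈ Finset.range k, l ^ (n - i) * n.choose i) → Fin (l + 1),
      Simple' M ∧
      (∀ j, (Finset.univ.filter fun i => (M i j : ℕ) = l).card ≤ k - 1) ∧
      ¬ IsSubmatrix (Kgen k l) M := by
  have part1 : ∀ (m : ℕ) (M : Fin n → Fin m → Fin (l + 1)),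
      (∀ j, (Finset.univ.filter fun i => (M i j : ℕ) = l).card ≤ k - 1) →
      ¬ IsSubmatrix (Kgen k l) M := by
    intro m M hM ⟨r, s, hr, hs, h⟩
    have hpos : 0 < (l + 1) ^ k := Nat.pow_pos (by omega)
    set jl : Fin ((l + 1) ^ k) := ⟨(l + 1) ^ k - 1, Nat.sub_lt hpos one_pos⟩ with hjl
    have hall : ∀ i : Fin k, (M (r i) (s jl) : ℕ) = l := by
      intro i
      rw [h i jl]
      show ((l + 1) ^ k - 1) / (l + 1) ^ (i : ℕ) % (l + 1) = l
      exact digit_all_l l k i i.isLt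
    have hsub : Finset.univ.image r ⊆
        Finset.univ.filter fun i => (M i (s jl) : ℕ) = l := by
      intro x hx
      rw [Finset.mem_image] at hx
      obtain ⟨i, _, rfl⟩ := hx
      rw [Finset.mem_filter]
      exact ⟨Finset.mem_univ _, hall i⟩
    have hk' := Finset.card_le_card hsub
    rw [Finset.card_image_of_injective _ hr, Finset.card_univ, Fintype.card_fin] at hk'
    have := hM (s jl)
    omega
  refine ⟨part1, ?_⟩
  set S := Finset.univ.filter fun C : Fin n → Fin (l + 1) =>
      (Finset.univ.filter fun j => (C j : ℕ) = l).card ≤ k - 1 with hSdef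
  have hS : S.card = ∑ i ∈ Finset.range k, l ^ (n - i) * n.choose i := count_total n l k hk
  set e := (Finset.equivFinOfCardEq hS).symm
  refine ⟨fun i j => (e j).1 i, ?_, ?_, ?_⟩
  · intro j₁ j₂ hcol
    have h1 : (e j₁ : Fin n → Fin (l + 1)) = (e j₂ : Fin n → Fin (l + 1)) := funext hcol
    exact e.injective (Subtype.ext h1)
  · intro j
    exact (Finset.mem_filter.mp (e j).2).2
  · exact part1 _ _ fun j => by
      exact (Finset.mem_filter.mp (e j).2).2
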